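/- Let α > 0 and c > 0. There exists c' > 0 depending only on c such that the following holds. Let N₁ ≥ N₂ > 0 and ξ₁, ξ₂, η₁, η₂ ∈ ℝ with ξ₁, ξ₂ nonzero, N₁/8 ≤ |ξ₁| ≤ 8N₁, N₂/8 ≤ |ξ₂| ≤ 8N₂, and |η₁ ξ₂ - η₂ ξ₁| ≥ c N₁^{α/2+1} N₂. Then |∇ω_α(ξ₁,η₁) - ∇ω_α(ξ₂,η₂)| ≥ |η₁/ξ₁ - η₂/ξ₂| ≥ c' N₁^{α/2}, where ∇ω_α(ξ,η) = ((α+1)|ξ|^α - η²/ξ², 2η/ξ). -/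

import Mathlib

/-- transversality of group velocities in the resonant case. The gradient of the
dispersion relation is `∇ω_α(ξ,η) = ((α+1)|ξ|^α - η²/ξ², 2η/ξ)` and its difference (in the
Euclidean norm) dominates `|η₁/ξ₁ - η₂/ξ₂| ≥ c' N₁^{α/2}`, with `c'` depending only on `c`. -/
theorem statement5 (c : ℝ) (hc : 0 < c) :
    ∃ c' : ℝ, 0 < c' ∧
      ∀ α : ℝ, 0 < α →
        ∀ N₁ N₂ ξ₁ ξ₂ η₁ η₂ : ℝ, 0 < N₂ → N₂ ≤ N₁ →
          ξ₁ ≠ 0 → ξ₂ ≠ 0 →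
          N₁ / 8 ≤ |ξ₁| → |ξ₁| ≤ 8 * N₁ →
          N₂ / 8 ≤ |ξ₂| → |ξ₂| ≤ 8 * N₂ →
          c * N₁ ^ (α / 2 + 1) * N₂ ≤ |η₁ * ξ₂ - η₂ * ξ₁| →
          c' * N₁ ^ (α / 2) ≤ |η₁ / ξ₁ - η₂ / ξ₂| ∧
            |η₁ / ξ₁ - η₂ / ξ₂| ≤
              Real.sqrt
                ((((α + 1) * |ξ₁| ^ α - η₁ ^ 2 / ξ₁ ^ 2) -
                    ((α + 1) * |ξ₂| ^ α - η₂ ^ 2 / ξ₂ ^ 2)) ^ 2 +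
                  (2 * η₁ / ξ₁ - 2 * η₂ / ξ₂) ^ 2) := by
  refine ⟨c / 64, by positivity, ?_⟩
  intro α hα N₁ N₂ ξ₁ ξ₂ η₁ η₂ hN₂ hN ne₁ ne₂ h1l h1u h2l h2u hres
  have hN₁ : 0 < N₁ := lt_of_lt_of_le hN₂ hN
  have habs₁ : 0 < |ξ₁| := abs_pos.mpr ne₁
  have habs₂ : 0 < |ξ₂| := abs_pos.mpr ne₂
  have hd : η₁ / ξ₁ - η₂ / ξ₂ = (η₁ * ξ₂ - η₂ * ξ₁) / (ξ₁ * ξ₂) := by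
    field_simp
  constructor
  · rw [hd, abs_div, abs_mul]
    rw [le_div_iff₀ (by positivity)]
    calc c / 64 * N₁ ^ (α / 2) * (|ξ₁| * |ξ₂|)
        ≤ c / 64 * N₁ ^ (α / 2) * ((8 * N₁) * (8 * N₂)) := by
          apply mul_le_mul_of_nonneg_left (by exact mul_le_mul h1u h2u habs₂.le (by positivity))
          positivity
      _ = c * N₁ ^ (α / 2 + 1) * N₂ := by
          rw [Real.rpow_add hN₁, Real.rpow_one]; ring
      _ ≤ |η₁ * ξ₂ - η₂ * ξ₁| := hres
  · set A := ((α + 1) * |ξ₁| ^ α - η₁ ^ 2 / ξ₁ ^ 2) - ((α + 1) * |ξ₂| ^ α - η₂ ^ 2 / ξ₂ ^ 2)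
    have h4 : (η₁ / ξ₁ - η₂ / ξ₂) ^ 2 ≤ A ^ 2 + (2 * η₁ / ξ₁ - 2 * η₂ / ξ₂) ^ 2 := by
      have h2 : (2 * η₁ / ξ₁ - 2 * η₂ / ξ₂) ^ 2 = 4 * (η₁ / ξ₁ - η₂ / ξ₂) ^ 2 := by ring
      nlinarith [sq_nonneg A, sq_nonneg (η₁ / ξ₁ - η₂ / ξ₂)]
    calc |η₁ / ξ₁ - η₂ / ξ₂| = Real.sqrt ((η₁ / ξ₁ - η₂ / ξ₂) ^ 2) := (Real.sqrt_sq_eq_abs _).symm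
      _ ≤ _ := Real.sqrt_le_sqrt h4
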